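/- arXiv:2501.13079 — 8 statements merged into one kernel-verified Lean document; each statement's English description precedes it below -/
import Mathlib

section
/- Let Ψ : ℝ → ℝ be defined by Ψ(r) = r²/(2(r + e^{-r} - 1)) for r ≠ 0 and Ψ(0) = 1. Then Ψ is strictly monotone increasing on ℝ. -/
/-- The cost function `Ψ(r) = r² / (2(r + e^{-r} - 1))` for `r ≠ 0`, with `Ψ(0) = 1`. -/
noncomputable def Psi (r : ℝ) : ℝ :=
  if r = 0 then 1 else r ^ 2 / (2 * (r + Real.exp (-r) - 1))

/-- Integral representation kernel: `F r = ∫₀¹ 2(1-t) e^{-rt} dt`. -/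
noncomputable def PsiF (r : ℝ) : ℝ := ∫ t in (0:ℝ)..1, 2 * (1 - t) * Real.exp (-(r * t))

lemma PsiF_cont (r : ℝ) : Continuous fun t : ℝ => 2 * (1 - t) * Real.exp (-(r * t)) := by
  continuity

lemma PsiF_pos (r : ℝ) : 0 < PsiF r := by
  apply intervalIntegral.intervalIntegral_pos_of_pos_on ((PsiF_cont r).intervalIntegrable 0 1)
  · intro t ht
    have : (0:ℝ) < 1 - t := by linarith [ht.2]
    positivity
  · norm_num

lemma PsiF_zero : PsiF 0 = 1 := by
  have h : (fun t : ℝ => 2 * (1 - t) * Real.exp (-((0:ℝ) * t))) = fun t : ℝ => 2 - 2 * t := by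
    funext t; simp; ring
  rw [PsiF, h, intervalIntegral.integral_sub (f := fun _ => (2:ℝ)) (g := fun t : ℝ => 2 * t)
    intervalIntegrable_const
    ((continuous_const.mul continuous_id').intervalIntegrable (0:ℝ) 1),
    intervalIntegral.integral_const_mul, integral_id, intervalIntegral.integral_const]
  norm_num

lemma PsiF_eq (r : ℝ) (hr : r ≠ 0) : PsiF r = 2 * (r + Real.exp (-r) - 1) / r ^ 2 := by
  have key : ∀ t : ℝ, HasDerivAt (fun t => Real.exp (-(r * t)) * (2 * r * t + 2 - 2 * r) / r ^ 2)
      (2 * (1 - t) * Real.exp (-(r * t))) t := by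
    intro t
    have h1 : HasDerivAt (fun t : ℝ => -(r * t)) (-r) t := by
      have := ((hasDerivAt_id t).const_mul r).neg
      simp only [id, mul_one] at this
      exact this
    have h2 : HasDerivAt (fun t => Real.exp (-(r * t))) (Real.exp (-(r * t)) * (-r)) t :=
      (Real.hasDerivAt_exp _).comp t h1
    have h3 : HasDerivAt (fun t : ℝ => 2 * r * t + 2 - 2 * r) (2 * r) t := by
      simpa using (((hasDerivAt_id t).const_mul (2 * r)).add_const 2).sub_const (2 * r)
    have h4 : HasDerivAt (fun t => Real.exp (-(r * t)) * (2 * r * t + 2 - 2 * r) / r ^ 2) _ t :=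
      (h2.mul h3).div_const (r ^ 2)
    convert h4 using 1
    field_simp
    ring
  have h5 := intervalIntegral.integral_eq_sub_of_hasDerivAt (fun t _ => key t)
    ((PsiF_cont r).intervalIntegrable 0 1)
  rw [PsiF, h5]
  field_simp
  simp only [mul_zero, neg_zero, mul_one, Real.exp_zero]
  ring

lemma PsiF_strictAnti : StrictAnti PsiF := by
  intro a b hab
  have hpos : 0 < PsiF a - PsiF b := by
    rw [PsiF, PsiF, ← intervalIntegral.integral_sub ((PsiF_cont a).intervalIntegrable 0 1)
      ((PsiF_cont b).intervalIntegrable 0 1)]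
    apply intervalIntegral.intervalIntegral_pos_of_pos_on
      (((PsiF_cont a).sub (PsiF_cont b)).intervalIntegrable 0 1)
    · intro t ht
      have h1 : Real.exp (-(b * t)) < Real.exp (-(a * t)) := by
        apply Real.exp_lt_exp.2
        nlinarith [ht.1]
      show 0 < 2 * (1 - t) * Real.exp (-(a * t)) - 2 * (1 - t) * Real.exp (-(b * t))
      nlinarith [ht.2]
    · norm_num
  linarith

lemma Psi_eq (r : ℝ) : Psi r = 1 / PsiF r := by
  by_cases hr : r = 0
  · simp [hr, Psi, PsiF_zero]
  · rw [Psi, if_neg hr, PsiF_eq r hr, one_div_div]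

/-- `Ψ` is strictly monotone increasing on `ℝ`. -/
theorem Psi_strictMono : StrictMono Psi := by
  intro a b hab
  rw [Psi_eq a, Psi_eq b]
  exact one_div_lt_one_div_of_lt (PsiF_pos b) (PsiF_strictAnti hab)
end

section
/- Let Ψ : ℝ → ℝ be defined by Ψ(r) = r²/(2(r + e^{-r} - 1)) for r ≠ 0 and Ψ(0) = 1. Then Ψ(r) ≤ 1 + r for all r ≥ 0. -/
lemma key_aux (r : ℝ) (hr : 0 ≤ r) : 2 ≤ 2 * (1 + r) * Real.exp (-r) + r ^ 2 := by
  set f : ℝ → ℝ := fun x => 2 * (1 + x) * Real.exp (-x) + x ^ 2 with hf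
  have hderiv : ∀ x : ℝ, HasDerivAt f (2 * x * (1 - Real.exp (-x))) x := by
    intro x
    have h1 : HasDerivAt (fun x : ℝ => Real.exp (-x)) (-Real.exp (-x)) x := by
      simpa using (hasDerivAt_neg x).exp
    have h2 : HasDerivAt (fun x : ℝ => 2 * (1 + x)) 2 x := by
      simpa using ((hasDerivAt_id x).const_add 1).const_mul 2
    have h3 := (h2.mul h1).add (hasDerivAt_pow 2 x)
    exact h3.congr_deriv (by push_cast; ring)
  have hmono : MonotoneOn f (Set.Ici (0 : ℝ)) := by
    apply monotoneOn_of_deriv_nonneg (convex_Ici 0)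
    · exact (Continuous.continuousOn (by continuity))
    · intro x hx
      exact (hderiv x).differentiableAt.differentiableWithinAt
    · intro x hx
      rw [(hderiv x).deriv]
      have hx0 : 0 ≤ x := le_of_lt (by simpa using hx)
      have : Real.exp (-x) ≤ 1 := Real.exp_le_one_iff.mpr (by linarith)
      nlinarith
  have h0 : f 0 ≤ f r := hmono (by simp) (by simpa using hr) hr
  simpa [hf] using h0

/-- `Ψ(r) ≤ 1 + r` for all `r ≥ 0`. -/
theorem Psi_le_one_add (r : ℝ) (hr : 0 ≤ r) : Psi r ≤ 1 + r := by
  rcases eq_or_lt_of_le hr with h | h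
  · simp [Psi, ← h]
  · have hne : r ≠ 0 := ne_of_gt h
    rw [Psi, if_neg hne]
    have hexp : 1 + (-r) < Real.exp (-r) := by have := Real.add_one_lt_exp (neg_ne_zero.mpr hne); linarith
    have hd : 0 < 2 * (r + Real.exp (-r) - 1) := by linarith
    rw [div_le_iff₀ hd]
    have := key_aux r hr
    nlinarith
end

section
/- Let Ψ : ℝ → ℝ be defined by Ψ(r) = r²/(2(r + e^{-r} - 1)) for r ≠ 0 and Ψ(0) = 1. Then for every r ≥ 0 and every ℓ ∈ ℝ with |ℓ| ≤ r, one has Ψ(-r)·(e^{-ℓ} - 1 + ℓ) ≤ ℓ²/2 ≤ Ψ(r)·(e^{-ℓ} - 1 + ℓ). -/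
/-- Auxiliary integral representation: `G x = ∫₀¹ (1-u) e^{-xu} du`. -/
noncomputable def Gaux (x : ℝ) : ℝ := ∫ u in (0:ℝ)..1, (1 - u) * Real.exp (-(x * u))

lemma Gaux_eval (x : ℝ) : x ^ 2 * Gaux x = Real.exp (-x) - 1 + x := by
  have hcont : Continuous fun u : ℝ => x ^ 2 * ((1 - u) * Real.exp (-(x * u))) := by
    continuity
  have h : ∀ u ∈ Set.uIcc (0:ℝ) 1,
      HasDerivAt (fun u => (x * u + (1 - x)) * Real.exp (-(x * u)))
        (x ^ 2 * ((1 - u) * Real.exp (-(x * u)))) u := by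
    intro u _
    have h1 : HasDerivAt (fun u : ℝ => x * u + (1 - x)) x u := by
      simpa using ((hasDerivAt_id u).const_mul x).add_const (1 - x)
    have h2 : HasDerivAt (fun u : ℝ => Real.exp (-(x * u)))
        (Real.exp (-(x * u)) * (-x)) u := by
      have := (((hasDerivAt_id u).const_mul x).neg).exp
      simpa using this
    have : HasDerivAt (fun u => (x * u + (1 - x)) * Real.exp (-(x * u)))
        (x * Real.exp (-(x * u)) + (x * u + (1 - x)) * (Real.exp (-(x * u)) * -x)) u :=
      h1.mul h2
    convert this using 1
    ring
  have hInt := intervalIntegral.integral_eq_sub_of_hasDerivAt h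
    (hcont.intervalIntegrable 0 1)
  have : x ^ 2 * Gaux x = ∫ u in (0:ℝ)..1, x ^ 2 * ((1 - u) * Real.exp (-(x * u))) := by
    rw [Gaux, ← intervalIntegral.integral_const_mul]
  rw [this, hInt]
  simp
  ring

lemma Gaux_anti {a b : ℝ} (hab : a ≤ b) : Gaux b ≤ Gaux a := by
  apply intervalIntegral.integral_mono_on (by norm_num : (0:ℝ) ≤ 1)
  · exact (by continuity : Continuous fun u : ℝ => (1 - u) * Real.exp (-(b * u))).intervalIntegrable 0 1
  · exact (by continuity : Continuous fun u : ℝ => (1 - u) * Real.exp (-(a * u))).intervalIntegrable 0 1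
  · intro u hu
    obtain ⟨hu0, hu1⟩ := hu
    apply mul_le_mul_of_nonneg_left _ (by linarith)
    apply Real.exp_le_exp.mpr
    nlinarith

lemma Gaux_pos {x : ℝ} (hx : x ≠ 0) : 0 < Gaux x := by
  have hE : 0 < Real.exp (-x) - 1 + x := by
    have := Real.add_one_lt_exp (x := -x) (by simpa using hx)
    linarith
  have := Gaux_eval x
  have hx2 : 0 < x ^ 2 := by positivity
  nlinarith

/-- for every `r ≥ 0` and every `ℓ` with `|ℓ| ≤ r`, one has
`Ψ(-r)(e^{-ℓ} - 1 + ℓ) ≤ ℓ²/2 ≤ Ψ(r)(e^{-ℓ} - 1 + ℓ)`. -/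
theorem Psi_sandwich (r : ℝ) (hr : 0 ≤ r) (l : ℝ) (hl : |l| ≤ r) :
    Psi (-r) * (Real.exp (-l) - 1 + l) ≤ l ^ 2 / 2 ∧
      l ^ 2 / 2 ≤ Psi r * (Real.exp (-l) - 1 + l) := by
  rcases eq_or_lt_of_le hr with h0 | hrpos
  · have hl0 : l = 0 := by
      have := abs_nonneg l; have : |l| = 0 := le_antisymm (h0 ▸ hl) (abs_nonneg l)
      exact abs_eq_zero.mp this
    subst hl0
    simp [Psi, ← h0]
  · have hrne : r ≠ 0 := ne_of_gt hrpos
    have hlr : -r ≤ l ∧ l ≤ r := abs_le.mp hl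
    have hEl : Real.exp (-l) - 1 + l = l ^ 2 * Gaux l := (Gaux_eval l).symm
    have hGr : 0 < Gaux r := Gaux_pos hrne
    have hGmr : 0 < Gaux (-r) := Gaux_pos (neg_ne_zero.mpr hrne)
    have hPr : Psi r = 1 / (2 * Gaux r) := by
      rw [Psi, if_neg hrne]
      have : r + Real.exp (-r) - 1 = r ^ 2 * Gaux r := by
        have := Gaux_eval r; linarith
      rw [this]
      field_simp
    have hPmr : Psi (-r) = 1 / (2 * Gaux (-r)) := by
      rw [Psi, if_neg (neg_ne_zero.mpr hrne)]
      have : -r + Real.exp (-(-r)) - 1 = (-r) ^ 2 * Gaux (-r) := by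
        have := Gaux_eval (-r); linarith
      rw [this]
      have : ((-r) : ℝ) ^ 2 = r ^ 2 := by ring
      field_simp
    have hGl1 : Gaux r ≤ Gaux l := Gaux_anti hlr.2
    have hGl2 : Gaux l ≤ Gaux (-r) := Gaux_anti hlr.1
    have hl2 : (0:ℝ) ≤ l ^ 2 := by positivity
    constructor
    · rw [hPmr, hEl]
      rw [div_mul_eq_mul_div, one_mul, div_le_div_iff₀ (by linarith) (by norm_num)]
      nlinarith
    · rw [hPr, hEl]
      rw [div_mul_eq_mul_div, one_mul, le_div_iff₀ (by linarith)]
      nlinarith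
end

section
/- Let X be a finite set, T a stochastic matrix on X, and let L and Γ be the associated generator and carré du champ operator. Let f : X → ℝ be positive and let r ≥ 0 satisfy |log f(x) - log f(y)| ≤ r whenever T(x,y) > 0. Then for every x ∈ X: Ψ(-r)·((Lf)(x)/f(x) - (L log f)(x)) ≤ (Γ(log f))(x) ≤ Ψ(r)·((Lf)(x)/f(x) - (L log f)(x)), where Ψ(r) = r²/(2(r + e^{-r} - 1)) for r ≠ 0 and Ψ(0) = 1. -/
variable {X : Type*}

/-- `T` is a stochastic matrix: nonnegative entries and unit row sums. -/
def IsStochastic [Fintype X] (T : X → X → ℝ) : Prop :=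
  (∀ x y, 0 ≤ T x y) ∧ ∀ x, ∑ y, T x y = 1

/-- The generator: `(L f)(x) = ∑_y T(x,y) (f(y) - f(x))`. -/
noncomputable def gen [Fintype X] (T : X → X → ℝ) (f : X → ℝ) : X → ℝ :=
  fun x => ∑ y, T x y * (f y - f x)

/-- The carré du champ operator: `(Γ f)(x) = (1/2) ∑_y T(x,y) (f(y) - f(x))²`. -/
noncomputable def carre [Fintype X] (T : X → X → ℝ) (f : X → ℝ) : X → ℝ :=
  fun x => (1 / 2) * ∑ y, T x y * (f y - f x) ^ 2


open Real


open Real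

lemma E_nonneg (t : ℝ) : 0 ≤ Real.exp t - 1 - t := by
  nlinarith [Real.add_one_le_exp t]

lemma gprime_nonneg (s : ℝ) : 0 ≤ (s - 1) * Real.exp s + 1 := by
  have h1 : 1 - s ≤ Real.exp (-s) := by nlinarith [Real.add_one_le_exp (-s)]
  have h2 : Real.exp (-s) * Real.exp s = 1 := by rw [← Real.exp_add]; simp
  nlinarith [Real.exp_pos s]

lemma g2_mono : Monotone (fun s : ℝ => (s - 2) * Real.exp s + s + 2) := by
  apply monotone_of_deriv_nonneg
  · fun_prop
  · intro x
    have h : HasDerivAt (fun s : ℝ => (s - 2) * Real.exp s + s + 2)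
        ((x - 1) * Real.exp x + 1) x := by
      have h1 : HasDerivAt (fun s : ℝ => (s - 2) * Real.exp s)
          (1 * Real.exp x + (x - 2) * Real.exp x) x :=
        ((hasDerivAt_id x).sub_const 2).mul (Real.hasDerivAt_exp x)
      have h2 := (h1.add (hasDerivAt_id x)).add_const 2
      have e : (x - 1) * Real.exp x + 1 = 1 * Real.exp x + (x - 2) * Real.exp x + 1 := by ring
      rw [e]; exact h2
    rw [h.deriv]
    exact gprime_nonneg x

lemma g2_nonneg {s : ℝ} (hs : 0 ≤ s) : 0 ≤ (s - 2) * Real.exp s + s + 2 := by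
  have := g2_mono hs; simpa using this

lemma g2_nonpos {s : ℝ} (hs : s ≤ 0) : (s - 2) * Real.exp s + s + 2 ≤ 0 := by
  have := g2_mono hs; simpa using this

lemma quad_mono : Monotone (fun s : ℝ => Real.exp s - 1 - s - s ^ 2 / 2) := by
  apply monotone_of_deriv_nonneg
  · fun_prop
  · intro x
    have h : HasDerivAt (fun s : ℝ => Real.exp s - 1 - s - s ^ 2 / 2)
        (Real.exp x - 1 - x) x := by
      have h2 : HasDerivAt (fun s : ℝ => s ^ 2 / 2) x x := by
        simpa using (hasDerivAt_pow 2 x).div_const 2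
      exact (((Real.hasDerivAt_exp x).sub_const 1).sub (hasDerivAt_id x)).sub h2
    rw [h.deriv]
    exact E_nonneg x

lemma quad_pos {s : ℝ} (hs : 0 ≤ s) : 1 + s + s ^ 2 / 2 ≤ Real.exp s := by
  have := quad_mono hs
  simp only [Real.exp_zero] at this
  nlinarith

lemma quad_neg {s : ℝ} (hs : s ≤ 0) : Real.exp s ≤ 1 + s + s ^ 2 / 2 := by
  have := quad_mono hs
  simp only [Real.exp_zero] at this
  nlinarith

noncomputable def Hfun (s : ℝ) : ℝ := (Real.exp s - 1 - s) / s ^ 2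

lemma H_hasDeriv {s : ℝ} (hs : s ≠ 0) :
    HasDerivAt Hfun
      (((Real.exp s - 1) * s ^ 2 - (Real.exp s - 1 - s) * ((2 : ℕ) * s ^ 1)) / (s ^ 2) ^ 2) s :=
  (((Real.hasDerivAt_exp s).sub_const 1).sub (hasDerivAt_id s)).div (hasDerivAt_pow 2 s)
    (pow_ne_zero 2 hs)

lemma H_deriv_nonneg {s : ℝ} (hs : s ≠ 0) : 0 ≤ deriv Hfun s := by
  rw [(H_hasDeriv hs).deriv]
  have h4 : (0:ℝ) < (s ^ 2) ^ 2 := by positivity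
  apply div_nonneg _ h4.le
  have hid : (Real.exp s - 1) * s ^ 2 - (Real.exp s - 1 - s) * ((2:ℕ) * s ^ 1)
      = s * ((s - 2) * Real.exp s + s + 2) := by push_cast; ring
  rw [hid]
  rcases hs.lt_or_gt with h | h
  · nlinarith [mul_nonneg (neg_nonneg.mpr h.le) (neg_nonneg.mpr (g2_nonpos h.le))]
  · exact mul_nonneg h.le (g2_nonneg h.le)

lemma H_mono_pos : MonotoneOn Hfun (Set.Ioi 0) := by
  apply monotoneOn_of_deriv_nonneg (convex_Ioi 0)
  · intro s hs
    exact (H_hasDeriv (ne_of_gt (Set.mem_Ioi.mp hs))).continuousAt.continuousWithinAt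
  · intro s hs
    rw [interior_Ioi] at hs
    exact (H_hasDeriv (ne_of_gt (Set.mem_Ioi.mp hs))).differentiableAt.differentiableWithinAt
  · intro s hs
    rw [interior_Ioi] at hs
    exact H_deriv_nonneg (ne_of_gt (Set.mem_Ioi.mp hs))

lemma H_mono_neg : MonotoneOn Hfun (Set.Iio 0) := by
  apply monotoneOn_of_deriv_nonneg (convex_Iio 0)
  · intro s hs
    exact (H_hasDeriv (ne_of_lt (Set.mem_Iio.mp hs))).continuousAt.continuousWithinAt
  · intro s hs
    rw [interior_Iio] at hs
    exact (H_hasDeriv (ne_of_lt (Set.mem_Iio.mp hs))).differentiableAt.differentiableWithinAt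
  · intro s hs
    rw [interior_Iio] at hs
    exact H_deriv_nonneg (ne_of_lt (Set.mem_Iio.mp hs))

lemma key_ineq {u v : ℝ} (h : u ≤ v) :
    v ^ 2 * (Real.exp u - 1 - u) ≤ u ^ 2 * (Real.exp v - 1 - v) := by
  rcases eq_or_ne u 0 with rfl | hu
  · simp
  rcases eq_or_ne v 0 with rfl | hv
  · simp
  have hu2 : (0:ℝ) < u ^ 2 := by positivity
  have hv2 : (0:ℝ) < v ^ 2 := by positivity
  rcases hu.lt_or_gt with hun | hup
  · rcases hv.lt_or_gt with hvn | hvp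
    · have hm := H_mono_neg (Set.mem_Iio.mpr hun) (Set.mem_Iio.mpr hvn) h
      unfold Hfun at hm
      rw [div_le_div_iff₀ hu2 hv2] at hm
      nlinarith
    · have h1 : Real.exp u - 1 - u ≤ u ^ 2 / 2 := by nlinarith [quad_neg hun.le]
      have h2 : v ^ 2 / 2 ≤ Real.exp v - 1 - v := by nlinarith [quad_pos hvp.le]
      nlinarith [mul_le_mul_of_nonneg_left h1 hv2.le, mul_le_mul_of_nonneg_left h2 hu2.le]
  · have hvp : 0 < v := lt_of_lt_of_le hup h
    have hm := H_mono_pos (Set.mem_Ioi.mpr hup) (Set.mem_Ioi.mpr hvp) h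
    unfold Hfun at hm
    rw [div_le_div_iff₀ hu2 hv2] at hm
    nlinarith

lemma psi_upper {r s : ℝ} (hr : 0 ≤ r) (hs : |s| ≤ r) :
    s ^ 2 / 2 ≤ Psi r * (Real.exp s - 1 - s) := by
  rcases hr.eq_or_lt with heq | hrp
  · have hs0 : s = 0 := by
      have : |s| ≤ 0 := by rw [heq]; exact hs
      exact abs_nonpos_iff.mp this
    subst hs0
    simp [Psi, ← heq]
  · have hr0 : r ≠ 0 := ne_of_gt hrp
    have hd : 0 < r + Real.exp (-r) - 1 := by
      nlinarith [Real.add_one_lt_exp (neg_ne_zero.mpr hr0)]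
    have hrs : -r ≤ s := by
      have := (abs_le.mp hs).1; linarith
    have hK := key_ineq hrs
    rw [Psi, if_neg hr0, div_mul_eq_mul_div, div_le_div_iff₀ two_pos (by positivity)]
    nlinarith [hK]

lemma psi_lower {r s : ℝ} (hr : 0 ≤ r) (hs : |s| ≤ r) :
    Psi (-r) * (Real.exp s - 1 - s) ≤ s ^ 2 / 2 := by
  rcases hr.eq_or_lt with heq | hrp
  · have hs0 : s = 0 := by
      have : |s| ≤ 0 := by rw [heq]; exact hs
      exact abs_nonpos_iff.mp this
    subst hs0
    simp [Psi, ← heq]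
  · have hr0 : -r ≠ 0 := neg_ne_zero.mpr (ne_of_gt hrp)
    have hd : 0 < Real.exp r - 1 - r := by
      nlinarith [Real.add_one_lt_exp (ne_of_gt hrp)]
    have hsr : s ≤ r := (abs_le.mp hs).2
    have hK := key_ineq hsr
    rw [Psi, if_neg hr0, neg_neg, div_mul_eq_mul_div,
      div_le_div_iff₀ (by linarith) two_pos]
    nlinarith [hK]

/-- Approximate chain rule: if `f > 0` and `log f` has oscillation at most `r`
along edges, then `Ψ(-r)(Lf/f - L log f) ≤ Γ(log f) ≤ Ψ(r)(Lf/f - L log f)` pointwise. -/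
theorem approximate_chain_rule [Fintype X] (T : X → X → ℝ) (hT : IsStochastic T)
    (f : X → ℝ) (hf : ∀ x, 0 < f x) (r : ℝ) (hr : 0 ≤ r)
    (hLip : ∀ x y, 0 < T x y → |Real.log (f x) - Real.log (f y)| ≤ r) (x : X) :
    Psi (-r) * (gen T f x / f x - gen T (fun z => Real.log (f z)) x) ≤
        carre T (fun z => Real.log (f z)) x ∧
      carre T (fun z => Real.log (f z)) x ≤
        Psi r * (gen T f x / f x - gen T (fun z => Real.log (f z)) x) := by
  obtain ⟨hTnn, -⟩ := hT
  have hgen : gen T f x / f x - gen T (fun z => Real.log (f z)) x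
      = ∑ y, T x y * (Real.exp (Real.log (f y) - Real.log (f x)) - 1 -
          (Real.log (f y) - Real.log (f x))) := by
    simp only [gen]
    rw [Finset.sum_div, ← Finset.sum_sub_distrib]
    refine Finset.sum_congr rfl fun y _ => ?_
    have hfx : f x ≠ 0 := (hf x).ne'
    rw [Real.exp_sub, Real.exp_log (hf y), Real.exp_log (hf x)]
    field_simp
  have hcar : carre T (fun z => Real.log (f z)) x
      = (1 / 2) * ∑ y, T x y * (Real.log (f y) - Real.log (f x)) ^ 2 := rfl
  constructor
  · rw [hgen, hcar, Finset.mul_sum, Finset.mul_sum]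
    apply Finset.sum_le_sum
    intro y _
    rcases (hTnn x y).eq_or_lt with h0 | hpos
    · simp [← h0]
    · have hs : |Real.log (f y) - Real.log (f x)| ≤ r := by
        rw [abs_sub_comm]; exact hLip x y hpos
      nlinarith [mul_le_mul_of_nonneg_left (psi_lower hr hs) hpos.le]
  · rw [hgen, hcar, Finset.mul_sum, Finset.mul_sum]
    apply Finset.sum_le_sum
    intro y _
    rcases (hTnn x y).eq_or_lt with h0 | hpos
    · simp [← h0]
    · have hs : |Real.log (f y) - Real.log (f x)| ≤ r := by
        rw [abs_sub_comm]; exact hLip x y hpos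
      nlinarith [mul_le_mul_of_nonneg_left (psi_upper hr hs) hpos.le]
end

section
/- Let X be a finite set, T a stochastic matrix on X, L the associated generator, and π a fully supported probability measure on X with πT = π. Let μ be a probability measure on X, and for s ≥ 0 let μ_s = μ·exp(sL) (row vector acted on by the matrix exponential) and f_s(x) = μ_s(x)/π(x). Fix t ≥ 0 and assume f_t(x) > 0 for all x ∈ X. Then the map s ↦ ∑_x π(x) f_s(x) log f_s(x) is differentiable at s = t with derivative equal to ∑_x π(x) f_t(x)·(L log f_t)(x). -/
variable {X : Type*}

/-- The generator as a matrix: `L = T - Id`. -/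
noncomputable def genMat [Fintype X] [DecidableEq X] (T : X → X → ℝ) : Matrix X X ℝ :=
  fun x y => T x y - if x = y then 1 else 0

/-- The heat semigroup `P_t = exp (t L)` (matrix exponential). -/
noncomputable def heatSG [Fintype X] [DecidableEq X] (T : X → X → ℝ) (t : ℝ) : Matrix X X ℝ :=
  NormedSpace.exp (t • genMat T)

/-- Evolution of a measure (row vector) `μ_t = μ · exp (t L)`. -/
noncomputable def evolve [Fintype X] [DecidableEq X] (T : X → X → ℝ) (μ : X → ℝ) (t : ℝ) :
    X → ℝ :=
  Matrix.vecMul μ (heatSG T t)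

lemma evolve_hasDerivAt [Fintype X] [DecidableEq X] (T : X → X → ℝ) (μ : X → ℝ) (t : ℝ)
    (x : X) :
    HasDerivAt (fun s => evolve T μ s x)
      (Matrix.vecMul (evolve T μ t) (genMat T) x) t := by
  letI : SeminormedRing (Matrix X X ℝ) := Matrix.linftyOpSemiNormedRing
  letI : NormedRing (Matrix X X ℝ) := Matrix.linftyOpNormedRing
  letI : NormedAlgebra ℝ (Matrix X X ℝ) := Matrix.linftyOpNormedAlgebra
  have hexp : HasDerivAt (fun s : ℝ => NormedSpace.exp (s • genMat T))
      (NormedSpace.exp (t • genMat T) * genMat T) t :=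
    hasDerivAt_exp_smul_const (genMat T) t
  have hlin : IsLinearMap ℝ (fun M : Matrix X X ℝ => Matrix.vecMul μ M x) := by
    constructor
    · intro A B; simp [Matrix.vecMul, dotProduct, Matrix.add_apply, mul_add,
        Finset.sum_add_distrib]
    · intro c A; simp [Matrix.vecMul, dotProduct, Matrix.smul_apply, Finset.mul_sum,
        mul_comm, mul_assoc, mul_left_comm]
  let ℓ : Matrix X X ℝ →L[ℝ] ℝ := LinearMap.toContinuousLinearMap (IsLinearMap.mk' _ hlin)
  have := ℓ.hasFDerivAt.comp_hasDerivAt t hexp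
  have h2 : ℓ (NormedSpace.exp (t • genMat T) * genMat T)
      = Matrix.vecMul (evolve T μ t) (genMat T) x := by
    show Matrix.vecMul μ (NormedSpace.exp (t • genMat T) * genMat T) x = _
    rw [← Matrix.vecMul_vecMul]; rfl
  rw [show (fun s => evolve T μ s x) = (ℓ ∘ fun s : ℝ => NormedSpace.exp (s • genMat T)) from rfl,
    ← h2]
  exact this

lemma key_sum [Fintype X] [DecidableEq X] (T : X → X → ℝ) (hT : IsStochastic T)
    (ν g : X → ℝ) :
    ∑ x, Matrix.vecMul ν (genMat T) x * (g x + 1) = ∑ x, ν x * gen T g x := by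
  have hL : ∀ x, Matrix.vecMul ν (genMat T) x = ∑ y, ν y * (T y x - if y = x then 1 else 0) := by
    intro x; simp [Matrix.vecMul, dotProduct, genMat]
  simp only [hL, Finset.sum_mul]
  rw [Finset.sum_comm]
  refine Finset.sum_congr rfl fun y _ => ?_
  have : ∀ x, ν y * (T y x - if y = x then 1 else 0) * (g x + 1)
      = ν y * (T y x * g x) + ν y * T y x
        - ((if y = x then ν y * g x else 0) + (if y = x then ν y else 0)) := by
    intro x; by_cases h : y = x <;> simp [h] <;> ring
  simp only [this, Finset.sum_sub_distrib, Finset.sum_add_distrib, Finset.sum_ite_eq,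
    Finset.mem_univ, if_true, ← Finset.mul_sum, hT.2 y]
  unfold gen
  have hx : ∑ x, T y x * (g x - g y) = (∑ x, T y x * g x) - g y := by
    simp only [mul_sub, Finset.sum_sub_distrib, ← Finset.sum_mul, hT.2 y, one_mul]
  rw [hx]; ring

lemma summand_deriv (c : ℝ) (hc : 0 < c) (u : ℝ → ℝ) (d t : ℝ)
    (hu : HasDerivAt u d t) (hut : 0 < u t) :
    HasDerivAt (fun s => c * (u s / c) * Real.log (u s / c))
      (d * (Real.log (u t / c) + 1)) t := by
  have hfun : (fun s => c * (u s / c) * Real.log (u s / c))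
      = fun s => u s * Real.log (u s / c) := by
    funext s
    have : c * (u s / c) = u s := by field_simp
    rw [this]
  rw [hfun]
  have hlog : HasDerivAt (fun v : ℝ => v * Real.log (v / c))
      (Real.log (u t / c) + 1) (u t) := by
    have h1 : HasDerivAt (fun v : ℝ => v / c) (1 / c) (u t) := (hasDerivAt_id _).div_const c
    have h2 : HasDerivAt (fun v : ℝ => Real.log (v / c)) (1 / c / (u t / c)) (u t) :=
      h1.log (by positivity)
    have h3 := (hasDerivAt_id (u t)).mul h2
    have : (1 : ℝ) * Real.log (u t / c) + id (u t) * (1 / c / (u t / c))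
        = Real.log (u t / c) + 1 := by
      field_simp
      simp only [id_eq]; ring
    rwa [this] at h3
  have := hlog.comp t hu
  have e : d * (Real.log (u t / c) + 1) = (Real.log (u t / c) + 1) * d := mul_comm _ _
  rw [e]; exact this

/-- differentiability of the entropy along the flow, with derivative
`∑_x π(x) f_t(x) (L log f_t)(x)` at time `t`. -/
theorem entropy_hasDerivAt [Fintype X] [DecidableEq X] (T : X → X → ℝ) (hT : IsStochastic T)
    (pi : X → ℝ) (hpos : ∀ x, 0 < pi x) (hsum : ∑ x, pi x = 1)
    (hstat : ∀ y, ∑ x, pi x * T x y = pi y)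
    (μ : X → ℝ) (hμ0 : ∀ x, 0 ≤ μ x) (hμ1 : ∑ x, μ x = 1)
    (t : ℝ) (ht : 0 ≤ t) (hft : ∀ x, 0 < evolve T μ t x / pi x) :
    HasDerivAt
      (fun s => ∑ x, pi x * (evolve T μ s x / pi x) * Real.log (evolve T μ s x / pi x))
      (∑ x, pi x * (evolve T μ t x / pi x) *
        gen T (fun z => Real.log (evolve T μ t z / pi z)) x) t := by
  have hupos : ∀ x, 0 < evolve T μ t x := by
    intro x
    have h1 := hft x
    have h2 := hpos x
    have h3 : evolve T μ t x = (evolve T μ t x / pi x) * pi x := by field_simp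
    rw [h3]; positivity
  have hder : ∀ x : X, HasDerivAt
      (fun s => pi x * (evolve T μ s x / pi x) * Real.log (evolve T μ s x / pi x))
      (Matrix.vecMul (evolve T μ t) (genMat T) x * (Real.log (evolve T μ t x / pi x) + 1)) t :=
    fun x => summand_deriv (pi x) (hpos x) _ _ t (evolve_hasDerivAt T μ t x) (hupos x)
  have hsum' := HasDerivAt.fun_sum (fun x (_ : x ∈ Finset.univ) => hder x)
  have hkey := key_sum T hT (evolve T μ t) (fun z => Real.log (evolve T μ t z / pi z))
  have heq : ∑ x, pi x * (evolve T μ t x / pi x) *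
        gen T (fun z => Real.log (evolve T μ t z / pi z)) x
      = ∑ x, Matrix.vecMul (evolve T μ t) (genMat T) x *
        (Real.log (evolve T μ t x / pi x) + 1) := by
    rw [hkey]
    refine Finset.sum_congr rfl fun x _ => ?_
    have : pi x * (evolve T μ t x / pi x) = evolve T μ t x := by
      rw [← mul_div_assoc]; exact mul_div_cancel_left₀ _ (hpos x).ne'
    rw [this]
  rw [heq]
  exact hsum'
end

section
/- Let X be a finite set and π a fully supported probability measure on X, equipped with an adjacency relation ~. Suppose C > 0 is such that for every f : X → ℝ with ∑_x π(x)f(x) = 0 and |f(x) - f(y)| ≤ 1 whenever x ~ y, one has log(∑_x π(x)e^{t f(x)}) ≤ C·t²/4 for all t ≥ 0. Then for every f : X → ℝ with |f(x) - f(y)| ≤ 1 whenever x ~ y, max_x f(x) - min_x f(x) ≤ 2·√(C·log(1/π_min)), where π_min = min_x π(x). In particular, the diameter of the graph (X, ~) is at most 2·√(C·log(1/π_min)). -/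
variable {X : Type*}

/-- The graph associated with a symmetric adjacency relation `A` (this coincides with `A`
off the diagonal whenever `A` is symmetric). -/
noncomputable def relGraph (A : X → X → Prop) : SimpleGraph X where
  Adj x y := x ≠ y ∧ A x y ∧ A y x
  symm := by constructor; intro x y ⟨h1, h2, h3⟩; exact ⟨h1.symm, h3, h2⟩
  loopless := by constructor; intro x ⟨h1, _⟩; exact h1 rfl

private lemma herbst_opt (C L s v : ℝ) (hC : 0 < C) (hL : 0 ≤ L)
    (hs2 : s ^ 2 = C * L) (hs0 : 0 ≤ s)
    (hb : ∀ t : ℝ, 0 < t → v ≤ C * t / 4 + L / t) : v ≤ s := by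
  rcases eq_or_lt_of_le hs0 with hs | hs
  · have hLz : L = 0 := by
      have h0 : C * L = 0 := by rw [← hs2, ← hs]; ring
      rcases mul_eq_zero.mp h0 with h | h
      · exact absurd h hC.ne'
      · exact h
    rw [← hs]
    by_contra hcon
    push_neg at hcon
    have ht : 0 < 2 * v / C := div_pos (by linarith) hC
    have hbb := hb (2 * v / C) ht
    rw [hLz] at hbb
    have he : C * (2 * v / C) / 4 + 0 / (2 * v / C) = v / 2 := by
      rw [zero_div]; field_simp; ring
    rw [he] at hbb
    linarith
  · have ht : 0 < 2 * s / C := div_pos (by linarith) hC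
    have hbb := hb (2 * s / C) ht
    have e1 : C * (2 * s / C) / 4 = s / 2 := by field_simp; ring
    have e2 : L / (2 * s / C) = s / 2 := by
      rw [div_eq_iff (by positivity)]
      nlinarith [hs2]
    rw [e1, e2] at hbb
    linarith

/-- Herbst argument: sub-Gaussian MGF bounds for centered edge-Lipschitz
observables imply `max f - min f ≤ 2 √(C log(1/π_min))` for all edge-Lipschitz `f`;
in particular the diameter of the graph is at most `2 √(C log(1/π_min))`. -/
theorem herbst_diameter_bound [Fintype X] [Nonempty X]
    (A : X → X → Prop) (hsymmA : ∀ x y, A x y → A y x)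
    (hconn : (relGraph A).Connected)
    (pi : X → ℝ) (hpos : ∀ x, 0 < pi x) (hsum : ∑ x, pi x = 1)
    (C : ℝ) (hC : 0 < C)
    (hmgf : ∀ f : X → ℝ, (∑ x, pi x * f x = 0) → (∀ x y, A x y → |f x - f y| ≤ 1) →
      ∀ t : ℝ, 0 ≤ t →
        Real.log (∑ x, pi x * Real.exp (t * f x)) ≤ C * t ^ 2 / 4) :
    (∀ f : X → ℝ, (∀ x y, A x y → |f x - f y| ≤ 1) →
        (⨆ x, f x) - (⨅ x, f x) ≤ 2 * Real.sqrt (C * Real.log (1 / ⨅ x, pi x))) ∧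
      ((relGraph A).diam : ℝ) ≤ 2 * Real.sqrt (C * Real.log (1 / ⨅ x, pi x)) := by
  set L := Real.log (1 / ⨅ x, pi x) with hLdef
  set s := Real.sqrt (C * L) with hsdef
  obtain ⟨x0, hx0⟩ := Finite.exists_min pi
  have hinf : (⨅ x, pi x) = pi x0 :=
    le_antisymm (ciInf_le (Finite.bddBelow_range pi) x0) (le_ciInf hx0)
  have hπle1 : ∀ x, pi x ≤ 1 := by
    intro x
    rw [← hsum]
    exact Finset.single_le_sum (fun i _ => (hpos i).le) (Finset.mem_univ x)
  have hL0 : 0 ≤ L := by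
    rw [hLdef, hinf]
    apply Real.log_nonneg
    rw [le_div_iff₀ (hpos x0), one_mul]
    exact hπle1 x0
  have hCL : 0 ≤ C * L := mul_nonneg hC.le hL0
  have hs2 : s ^ 2 = C * L := Real.sq_sqrt hCL
  have hs0 : 0 ≤ s := Real.sqrt_nonneg _
  -- Key pointwise bound
  have key : ∀ g : X → ℝ, (∀ x y, A x y → |g x - g y| ≤ 1) →
      ∀ z, g z - (∑ x, pi x * g x) ≤ s := by
    intro g hg z
    set μ := ∑ x, pi x * g x with hμ
    apply herbst_opt C L s _ hC hL0 hs2 hs0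
    intro t ht
    have hcent : ∑ x, pi x * (g x - μ) = 0 := by
      simp only [mul_sub]
      rw [Finset.sum_sub_distrib, ← Finset.sum_mul, hsum, ← hμ]
      ring
    have hlip : ∀ x y, A x y → |(g x - μ) - (g y - μ)| ≤ 1 := by
      intro x y hxy
      have := hg x y hxy
      have e : (g x - μ) - (g y - μ) = g x - g y := by ring
      rw [e]
      exact this
    have H := hmgf (fun x => g x - μ) hcent hlip t ht.le
    have hsingle : pi z * Real.exp (t * (g z - μ)) ≤
        ∑ x, pi x * Real.exp (t * (g x - μ)) :=
      Finset.single_le_sum (f := fun x => pi x * Real.exp (t * (g x - μ)))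
        (fun i _ => mul_nonneg (hpos i).le (Real.exp_pos _).le) (Finset.mem_univ z)
    have hlog : Real.log (pi z * Real.exp (t * (g z - μ))) ≤ C * t ^ 2 / 4 :=
      le_trans (Real.log_le_log (mul_pos (hpos z) (Real.exp_pos _)) hsingle) H
    rw [Real.log_mul (hpos z).ne' (Real.exp_pos _).ne', Real.log_exp] at hlog
    have hlz : -Real.log (pi z) ≤ L := by
      rw [hLdef, hinf, one_div, Real.log_inv]
      exact neg_le_neg (Real.log_le_log (hpos x0) (hx0 z))
    have h1 : t * (g z - μ) ≤ C * t ^ 2 / 4 + L := by linarith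
    have h2 : g z - μ ≤ (C * t ^ 2 / 4 + L) / t := by
      rw [le_div_iff₀ ht]
      nlinarith
    calc g z - μ ≤ (C * t ^ 2 / 4 + L) / t := h2
      _ = C * t / 4 + L / t := by field_simp
  have main : ∀ f : X → ℝ, (∀ x y, A x y → |f x - f y| ≤ 1) →
      (⨆ x, f x) - (⨅ x, f x) ≤ 2 * s := by
    intro f hf
    set μ := ∑ x, pi x * f x with hμ
    have hsup : (⨆ x, f x) ≤ μ + s := ciSup_le (fun x => by linarith [key f hf x])
    have hinf' : μ - s ≤ ⨅ x, f x := by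
      apply le_ciInf
      intro x
      have hneglip : ∀ a b, A a b → |(fun y => -f y) a - (fun y => -f y) b| ≤ 1 := by
        intro a b hab
        have e : (fun y => -f y) a - (fun y => -f y) b = -(f a - f b) := by ring
        rw [e, abs_neg]
        exact hf a b hab
      have h1 := key (fun y => -f y) hneglip x
      have h2 : ∑ y, pi y * (-f y) = -μ := by
        rw [hμ, ← Finset.sum_neg_distrib]
        congr 1; ext y; ring
      rw [h2] at h1
      linarith
    linarith
  refine ⟨main, ?_⟩
  obtain ⟨u, v, huv⟩ := (relGraph A).exists_dist_eq_diam
  have hflip : ∀ a b, A a b →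
      |((relGraph A).dist u a : ℝ) - ((relGraph A).dist u b : ℝ)| ≤ 1 := by
    intro a b hab
    by_cases hab' : a = b
    · simp [hab']
    · have hadj : (relGraph A).Adj a b := ⟨hab', hab, hsymmA a b hab⟩
      have t1 : (relGraph A).dist u a ≤ (relGraph A).dist u b + (relGraph A).dist b a :=
        hconn.dist_triangle
      have t2 : (relGraph A).dist u b ≤ (relGraph A).dist u a + (relGraph A).dist a b :=
        hconn.dist_triangle
      rw [SimpleGraph.dist_eq_one_iff_adj.mpr hadj.symm] at t1
      rw [SimpleGraph.dist_eq_one_iff_adj.mpr hadj] at t2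
      rw [abs_sub_le_iff]
      constructor
      · have : ((relGraph A).dist u a : ℝ) ≤ ((relGraph A).dist u b : ℝ) + 1 := by
          exact_mod_cast t1
        linarith
      · have : ((relGraph A).dist u b : ℝ) ≤ ((relGraph A).dist u a : ℝ) + 1 := by
          exact_mod_cast t2
        linarith
  have hbound := main (fun z => ((relGraph A).dist u z : ℝ)) hflip
  have hfv : ((relGraph A).dist u v : ℝ) ≤ ⨆ x, ((relGraph A).dist u x : ℝ) :=
    le_ciSup (f := fun x => ((relGraph A).dist u x : ℝ)) (Finite.bddAbove_range _) v
  have hfu : (⨅ x, ((relGraph A).dist u x : ℝ)) ≤ ((relGraph A).dist u u : ℝ) :=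
    ciInf_le (f := fun x => ((relGraph A).dist u x : ℝ)) (Finite.bddBelow_range _) u
  have hfu0 : ((relGraph A).dist u u : ℝ) = 0 := by
    simp [SimpleGraph.dist_self]
  have hdv : ((relGraph A).diam : ℝ) = ((relGraph A).dist u v : ℝ) := by
    exact_mod_cast huv.symm
  linarith
end

section
/- Let X and Y be finite sets, T a stochastic matrix on X, Φ : X → Y a surjective map, and T̂ a stochastic matrix on Y such that for all x ∈ X and y ∈ Y, ∑_{z : Φ(z)=y} T(x,z) = T̂(Φ(x), y). Let L, L̂ be the associated generators. Then for every t ≥ 0 and every f : Y → ℝ: exp(tL)(f∘Φ) = (exp(tL̂)f)∘Φ. -/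
variable {X : Type*}

attribute [local instance] Matrix.linftyOpNormedAddCommGroup Matrix.linftyOpNormedRing
  Matrix.linftyOpNormedSpace Matrix.linftyOpNormedAlgebra

private noncomputable def mulRightCLM {n m : Type*} [Fintype n] [Fintype m] [DecidableEq n]
    (P : Matrix n m ℝ) : Matrix n n ℝ →L[ℝ] Matrix n m ℝ :=
  LinearMap.toContinuousLinearMap
    { toFun := fun M => M * P
      map_add' := fun A B => Matrix.add_mul A B P
      map_smul' := fun c A => Matrix.smul_mul c A P }

private noncomputable def mulLeftCLM {n m : Type*} [Fintype n] [Fintype m] [DecidableEq m]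
    (P : Matrix n m ℝ) : Matrix m m ℝ →L[ℝ] Matrix n m ℝ :=
  LinearMap.toContinuousLinearMap
    { toFun := fun M => P * M
      map_add' := fun A B => Matrix.mul_add P A B
      map_smul' := fun c A => Matrix.mul_smul P c A }

lemma exp_intertwine {n m : Type*} [Fintype n] [Fintype m] [DecidableEq n] [DecidableEq m]
    (A : Matrix n n ℝ) (B : Matrix m m ℝ) (P : Matrix n m ℝ) (h : A * P = P * B) :
    NormedSpace.exp A * P = P * NormedSpace.exp B := by
  have hpow : ∀ k : ℕ, A ^ k * P = P * B ^ k := by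
    intro k
    induction k with
    | zero => simp
    | succ k ih =>
      rw [pow_succ', Matrix.mul_assoc, ih, ← Matrix.mul_assoc, h, Matrix.mul_assoc, ← pow_succ']
  have hA := NormedSpace.expSeries_summable' (𝕂 := ℝ) A
  have hB := NormedSpace.expSeries_summable' (𝕂 := ℝ) B
  rw [NormedSpace.exp_eq_tsum ℝ, NormedSpace.exp_eq_tsum ℝ]
  have h1 : (∑' k : ℕ, (k.factorial : ℝ)⁻¹ • A ^ k) * P
      = mulRightCLM P (∑' k : ℕ, (k.factorial : ℝ)⁻¹ • A ^ k) := rfl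
  have h2 : P * (∑' k : ℕ, (k.factorial : ℝ)⁻¹ • B ^ k)
      = mulLeftCLM P (∑' k : ℕ, (k.factorial : ℝ)⁻¹ • B ^ k) := rfl
  rw [h1, h2, (mulRightCLM P).map_tsum hA, (mulLeftCLM P).map_tsum hB]
  refine tsum_congr fun k => ?_
  show ((k.factorial : ℝ)⁻¹ • A ^ k) * P = P * ((k.factorial : ℝ)⁻¹ • B ^ k)
  rw [Matrix.smul_mul, Matrix.mul_smul, hpow]

/-- Markovian projection: semigroup intertwining:
`exp(tL)(f∘Φ) = (exp(tL̂)f)∘Φ` for all `t ≥ 0`. -/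
theorem markovian_projection_semigroup {Y : Type*} [Fintype X] [DecidableEq X]
    [Fintype Y] [DecidableEq Y]
    (T : X → X → ℝ) (hT : IsStochastic T)
    (Φ : X → Y) (hsurj : Function.Surjective Φ)
    (T' : Y → Y → ℝ) (hT' : IsStochastic T')
    (hproj : ∀ (x : X) (y : Y),
      ∑ z ∈ Finset.univ.filter fun z => Φ z = y, T x z = T' (Φ x) y) :
    ∀ t : ℝ, 0 ≤ t → ∀ f : Y → ℝ,
      (heatSG T t).mulVec (f ∘ Φ) = ((heatSG T' t).mulVec f) ∘ Φ := by
    classical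
  intro t ht f
  set P : Matrix X Y ℝ := fun x y => if Φ x = y then 1 else 0 with hP
  have hcomm : genMat T * P = P * genMat T' := by
    ext x y
    have h1 : ∑ z, T x z * P z y = T' (Φ x) y := by
      rw [← hproj x y, Finset.sum_filter]
      simp [hP, mul_ite]
    have h2 : ∑ w, P x w * T' w y = T' (Φ x) y := by
      simp [hP, ite_mul]
    have h3 : ∑ z, (if x = z then (1:ℝ) else 0) * P z y = P x y := by
      simp [ite_mul]
    have h4 : ∑ w, P x w * (if w = y then (1:ℝ) else 0) = P x y := by
      simp [mul_ite]
    simp only [Matrix.mul_apply, genMat, sub_mul, mul_sub, Finset.sum_sub_distrib]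
    rw [h1, h2, h3, h4]
  have hcomm' : (t • genMat T) * P = P * (t • genMat T') := by
    rw [Matrix.smul_mul, hcomm, Matrix.mul_smul]
  have hexp := exp_intertwine (t • genMat T) (t • genMat T') P hcomm'
  have hPf : P.mulVec f = f ∘ Φ := by
    ext x
    simp [hP, Matrix.mulVec, dotProduct, ite_mul]
  have hPg : ∀ g : Y → ℝ, P.mulVec g = g ∘ Φ := by
    intro g; ext x
    simp [hP, Matrix.mulVec, dotProduct, ite_mul]
  show (NormedSpace.exp (t • genMat T)).mulVec (f ∘ Φ)
      = ((NormedSpace.exp (t • genMat T')).mulVec f) ∘ Φ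
  rw [← hPf, Matrix.mulVec_mulVec, hexp, ← Matrix.mulVec_mulVec, hPg]
end

section
/- Let a > 0, C > 0, ε > 0, t₀ ≥ 0, and let h : ℝ → ℝ be continuous on [t₀, t] and differentiable on (t₀, t] with, for every s ∈ (t₀, t], h'(s) ≤ -(ε·h(s) - 1)²/(30(s·a + C)). Assume h is nonnegative. Then h(t) ≤ 1/ε + 30(t·a + C)/(ε²(t - t₀)) for every t > t₀. -/
/-- Integration of the differential inequality: if `h ≥ 0` is continuous on
`[t₀, t]`, differentiable on `(t₀, t]` with `h'(s) ≤ -(ε h(s) - 1)² / (30 (s a + C))`, then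
`h(t) ≤ 1/ε + 30 (t a + C) / (ε² (t - t₀))` for every `t > t₀`. -/
theorem integrate_differential_inequality
    (a C ε t₀ : ℝ) (ha : 0 < a) (hC : 0 < C) (hε : 0 < ε) (ht₀ : 0 ≤ t₀)
    (h : ℝ → ℝ) (hnn : ∀ s, 0 ≤ h s) :
    ∀ t : ℝ, t₀ < t →
      ContinuousOn h (Set.Icc t₀ t) →
      (∀ s ∈ Set.Ioc t₀ t, DifferentiableAt ℝ h s ∧
        deriv h s ≤ -(ε * h s - 1) ^ 2 / (30 * (s * a + C))) →
      h t ≤ 1 / ε + 30 * (t * a + C) / (ε ^ 2 * (t - t₀)) := by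
  intro t ht hcont hderiv
  by_contra hcon
  push_neg at hcon
  have htpos : 0 < t := lt_of_le_of_lt ht₀ ht
  have hDpos : (0:ℝ) < 30 * (t * a + C) := by positivity
  set D : ℝ := 30 * (t * a + C) with hDdef
  have hKpos : 0 < 1 / D := by positivity
  have htt : 0 < t - t₀ := sub_pos.mpr ht
  set B : ℝ := D / (ε ^ 2 * (t - t₀)) with hBdef
  have hBpos : 0 < B := by positivity
  -- denominators of the derivative bound are positive
  have hden : ∀ s ∈ Set.Ioc t₀ t, 0 < 30 * (s * a + C) := by
    intro s hs
    have : 0 < s := lt_of_le_of_lt ht₀ hs.1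
    positivity
  -- h is antitone on [t₀, t]
  have hmono : AntitoneOn h (Set.Icc t₀ t) := by
    apply antitoneOn_of_deriv_nonpos (convex_Icc t₀ t) hcont
    · intro x hx
      rw [interior_Icc] at hx
      exact ((hderiv x ⟨hx.1, hx.2.le⟩).1).differentiableWithinAt
    · intro x hx
      rw [interior_Icc] at hx
      have hx' : x ∈ Set.Ioc t₀ t := ⟨hx.1, hx.2.le⟩
      have h2 := (hderiv x hx').2
      have := hden x hx'
      have hnum : -(ε * h x - 1) ^ 2 ≤ 0 := by nlinarith [sq_nonneg (ε * h x - 1)]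
      calc deriv h x ≤ -(ε * h x - 1) ^ 2 / (30 * (x * a + C)) := h2
        _ ≤ 0 := div_nonpos_of_nonpos_of_nonneg hnum this.le
  -- lower bound on ε h s - 1
  have hlow : ∀ s ∈ Set.Icc t₀ t, ε * B < ε * h s - 1 := by
    intro s hs
    have hst : h t ≤ h s := hmono hs (Set.right_mem_Icc.mpr (le_of_lt ht)) hs.2
    nlinarith [mul_lt_mul_of_pos_left hcon hε, mul_le_mul_of_nonneg_left hst hε.le,
      mul_one_div_cancel hε.ne']
  have hεB : 0 < ε * B := by positivity
  -- define g
  set g : ℝ → ℝ := fun s => (ε * (ε * h s - 1))⁻¹ with hgdef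
  have hgpos : ∀ s ∈ Set.Icc t₀ t, 0 < g s := by
    intro s hs
    have h1 := hlow s hs
    have h2 : 0 < ε * (ε * h s - 1) := by nlinarith
    simpa [hgdef] using inv_pos.mpr h2
  -- derivative of g
  have hgderiv : ∀ x ∈ Set.Ioc t₀ t,
      HasDerivAt g (-(ε * (ε * deriv h x)) / (ε * (ε * h x - 1)) ^ 2) x := by
    intro x hx
    have hdx := (hderiv x hx).1
    have hne : ε * (ε * h x - 1) ≠ 0 := by
      have := hlow x ⟨hx.1.le, hx.2⟩
      nlinarith
    have h1 : HasDerivAt (fun s => ε * (ε * h s - 1)) (ε * (ε * deriv h x)) x := by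
      exact (((hdx.hasDerivAt.const_mul ε).sub_const 1).const_mul ε)
    exact h1.inv hne
  -- lower bound on deriv g
  have hgbound : ∀ x ∈ Set.Ioc t₀ t,(1 / D) ≤ deriv g x := by
    intro x hx
    rw [(hgderiv x hx).deriv]
    have h2 := (hderiv x hx).2
    have hd := hden x hx
    have hl := hlow x ⟨hx.1.le, hx.2⟩
    have hpos1 : 0 < ε * h x - 1 := lt_trans hεB hl
    have hsq : 0 < (ε * h x - 1) ^ 2 := pow_pos hpos1 2
    have hxa : 30 * (x * a + C) ≤ D := by
      rw [hDdef]; nlinarith [hx.2]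
    -- -(ε*(ε* h')) ≥ ε^2 (εh-1)^2/(30(xa+C))
    have key : (ε * h x - 1) ^ 2 / (30 * (x * a + C)) ≤ -(deriv h x) := by
      have := h2
      rw [neg_div] at this
      linarith
    have h30 : (ε * h x - 1) ^ 2 / D ≤ (ε * h x - 1) ^ 2 / (30 * (x * a + C)) :=
      div_le_div_of_nonneg_left hsq.le hd hxa
    have key2 : (ε * h x - 1) ^ 2 / D ≤ -(deriv h x) := le_trans h30 key
    rw [le_div_iff₀ (pow_pos (mul_pos hε hpos1) 2)]
    have e : 1 / D * (ε * (ε * h x - 1)) ^ 2 = ε ^ 2 * ((ε * h x - 1) ^ 2 / D) := by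
      field_simp
    rw [e]
    calc ε ^ 2 * ((ε * h x - 1) ^ 2 / D) ≤ ε ^ 2 * (-(deriv h x)) :=
          mul_le_mul_of_nonneg_left key2 (by positivity)
      _ = -(ε * (ε * deriv h x)) := by ring
  -- g t - g s ≥ K (t - s) for s ∈ (t₀, t)
  have hstep : ∀ s ∈ Set.Ioo t₀ t, 1/D * (t - s) ≤ g t := by
    intro s hs
    set φ : ℝ → ℝ := fun x => g x - (1/D) * x with hφdef
    have hmonoφ : MonotoneOn φ (Set.Icc s t) := by
      apply monotoneOn_of_deriv_nonneg (convex_Icc s t)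
      · apply ContinuousOn.sub
        · intro x hx
          exact ((hgderiv x ⟨lt_of_lt_of_le hs.1 hx.1, hx.2⟩).differentiableAt).continuousAt.continuousWithinAt
        · exact (continuous_const.mul continuous_id).continuousOn
      · intro x hx
        rw [interior_Icc] at hx
        have hx' : x ∈ Set.Ioc t₀ t := ⟨lt_trans hs.1 hx.1, hx.2.le⟩
        exact ((hgderiv x hx').differentiableAt.sub
          ((differentiable_id.const_mul (1/D)) x)).differentiableWithinAt
      · intro x hx
        rw [interior_Icc] at hx
        have hx' : x ∈ Set.Ioc t₀ t := ⟨lt_trans hs.1 hx.1, hx.2.le⟩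
        have hdφ : HasDerivAt φ (deriv g x - 1/D) x := by
          rw [(hgderiv x hx').deriv, hφdef]
          exact ((hgderiv x hx').sub ((hasDerivAt_id x).const_mul (1/D))).congr_deriv (by ring)
        rw [hdφ.deriv]
        linarith [hgbound x hx']
    have := hmonoφ (Set.left_mem_Icc.mpr hs.2.le) (Set.right_mem_Icc.mpr hs.2.le) hs.2.le
    have hgs : 0 < g s := hgpos s ⟨hs.1.le, hs.2.le⟩
    simp only [hφdef] at this
    nlinarith
  -- take the limit s → t₀⁺
  have hlim : 1/D * (t - t₀) ≤ g t := by
    have htend : Filter.Tendsto (fun s => 1/D * (t - s)) (nhdsWithin t₀ (Set.Ioi t₀))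
        (nhds (1/D * (t - t₀))) := by
      exact Filter.Tendsto.mono_left
        ((continuous_const.mul (continuous_const.sub continuous_id)).tendsto t₀)
        nhdsWithin_le_nhds
    refine le_of_tendsto htend ?_
    filter_upwards [Ioo_mem_nhdsGT_of_mem ⟨le_refl t₀, ht⟩] with s hs
    exact hstep s hs
  -- contradiction
  have hgt : g t < 1/D * (t - t₀) := by
    have hl := hlow t (Set.right_mem_Icc.mpr ht.le)
    have h1 : 0 < ε * (ε * B) := by positivity
    have h2 : ε * (ε * B) < ε * (ε * h t - 1) := by nlinarith
    have := one_div_lt_one_div_of_lt h1 h2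
    rw [hgdef]
    have heq : 1 / (ε * (ε * B)) = 1/D * (t - t₀) := by
      rw [hBdef]
      field_simp
    calc (ε * (ε * h t - 1))⁻¹ = 1 / (ε * (ε * h t - 1)) := (one_div _).symm
      _ < 1 / (ε * (ε * B)) := this
      _ = 1/D * (t - t₀) := heq
  linarith
end
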